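/- Let a = (a_1,…,a_m) and b = (b_1,…,b_m) be tuples of real numbers, let p = Σ_{i=1}^m a_i φ_i ∈ H and p' = Σ_{i=1}^m b_i φ'_i ∈ H'. Then (Σ_{i=1}^m (a_i − b_i)^2)^{1/2} ≤ (max_{1≤i≤m} ‖j φ_i − φ'_i‖) · Σ_{i=1}^m |a_i| + ‖j p − p'‖. (This is the paper's Lemma 3.2: the Euclidean distance between the spectral-coefficient vectors ψ' p' and ψ p is controlled by the defect α of j on the orthonormal family plus ‖j p − p'‖.) -/

import Mathlib

open RealInnerProductSpace

/-- Lemma 3.2 of the paper: the Euclidean distance between the spectral-coefficient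
vectors is controlled by the defect of `j` on the orthonormal family plus `‖j p - p'‖`. -/
theorem stmt0 {H H' : Type*} [NormedAddCommGroup H] [InnerProductSpace ℝ H]
    [NormedAddCommGroup H'] [InnerProductSpace ℝ H']
    {m : ℕ} (hm : 1 ≤ m)
    (φ : Fin m → H) (φ' : Fin m → H')
    (hφ : Orthonormal ℝ φ) (hφ' : Orthonormal ℝ φ')
    (j : H →L[ℝ] H') (a b : Fin m → ℝ)
    (p : H) (hp : p = ∑ i, a i • φ i)
    (p' : H') (hp' : p' = ∑ i, b i • φ' i) :
    Real.sqrt (∑ i, (a i - b i) ^ 2) ≤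
      (Finset.univ.sup' ⟨⟨0, hm⟩, Finset.mem_univ _⟩ (fun i => ‖j (φ i) - φ' i‖))
          * (∑ i, |a i|) + ‖j p - p'‖ := by
  set α := Finset.univ.sup' ⟨⟨0, hm⟩, Finset.mem_univ _⟩ (fun i => ‖j (φ i) - φ' i‖) with hα
  set q' : H' := ∑ i, a i • φ' i with hq'
  have key : Real.sqrt (∑ i, (a i - b i) ^ 2) = ‖q' - p'‖ := by
    have h1 : q' - p' = ∑ i, (a i - b i) • φ' i := by
      rw [hq', hp', ← Finset.sum_sub_distrib]
      simp [sub_smul]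
    have h2 : ‖q' - p'‖ ^ 2 = ∑ i, (a i - b i) ^ 2 := by
      rw [h1, InnerProductSpace.norm_sq_eq_re_inner (𝕜 := ℝ), hφ'.inner_sum]
      simp [sq]
    rw [← h2, Real.sqrt_sq (norm_nonneg _)]
  rw [key]
  have tri : ‖q' - p'‖ ≤ ‖q' - j p‖ + ‖j p - p'‖ := by
    simpa using norm_sub_le_norm_sub_add_norm_sub q' (j p) p'
  have hbound : ‖q' - j p‖ ≤ α * ∑ i, |a i| := by
    have hjp : j p = ∑ i, a i • j (φ i) := by
      rw [hp, map_sum]; simp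
    have : q' - j p = ∑ i, a i • (φ' i - j (φ i)) := by
      rw [hq', hjp, ← Finset.sum_sub_distrib]
      simp [smul_sub]
    rw [this]
    calc ‖∑ i, a i • (φ' i - j (φ i))‖ ≤ ∑ i, ‖a i • (φ' i - j (φ i))‖ :=
          norm_sum_le _ _
      _ ≤ ∑ i, |a i| * α := by
          refine Finset.sum_le_sum fun i _ => ?_
          rw [norm_smul, Real.norm_eq_abs]
          refine mul_le_mul_of_nonneg_left ?_ (abs_nonneg _)
          rw [norm_sub_rev]
          exact Finset.le_sup' (fun i => ‖j (φ i) - φ' i‖) (Finset.mem_univ i)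
      _ = α * ∑ i, |a i| := by rw [← Finset.sum_mul, mul_comm]
  linarith
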